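/- Let PF_n denote the set of classical parking functions of length n, i.e., sequences (c_1,...,c_n) of positive integers whose nondecreasing rearrangement satisfies c_{(i)} ≤ i. Let Z(c) be the number of entries of c equal to 1. Then Σ_{c ∈ PF_n} q^{Z(c)} = q·(q+n)^{n-1} as a polynomial identity in q. -/

import Mathlib

open Finset
open scoped Classical

/-- `c` rearranges nondecreasingly so that the `i`-th order statistic is at most `u i`. -/
def SortedLE {n : ℕ} (c u : Fin n → ℕ) : Prop :=
  ∃ σ : Equiv.Perm (Fin n),
    (∀ i j : Fin n, i ≤ j → c (σ i) ≤ c (σ j)) ∧ ∀ i, c (σ i) ≤ u i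

/-- Classical parking functions of length `n` : sequences in `{1,…,n}ⁿ` whose `i`-th
smallest entry is at most `i`. -/
noncomputable def parkFinset (n : ℕ) : Finset (Fin n → ℕ) :=
  (Fintype.piFinset fun _ : Fin n => Finset.Icc 1 n).filter
    (fun c => SortedLE c (fun i => i.1 + 1))

noncomputable def Park (n a : ℕ) : Finset (Fin n → ℕ) :=
  (Fintype.piFinset fun _ : Fin n => Finset.Icc 1 (a + n)).filter
    (fun d => ∀ j < n, j + 1 ≤ (univ.filter fun i => d i ≤ a + j).card)

lemma mem_park {n a : ℕ} {d : Fin n → ℕ} :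
    d ∈ Park n a ↔ (∀ i, 1 ≤ d i ∧ d i ≤ a + n) ∧
      ∀ j < n, j + 1 ≤ (univ.filter fun i => d i ≤ a + j).card := by
  simp [Park, Fintype.mem_piFinset, forall_and]

lemma fiber_card (n a : ℕ) (ha : 1 ≤ a) (S : Finset (Fin n)) (hS : S.Nonempty) :
    ((Park n a).filter (fun d => univ.filter (fun i => d i ≤ a) = S)).card
      = a ^ S.card * (Park (n - S.card) S.card).card := by
  set k := S.card with hk
  have hkn : k ≤ n := by simpa using S.card_le_univ
  have hk1 : 1 ≤ k := Finset.card_pos.2 hS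
  have hcompl : (Sᶜ : Finset (Fin n)).card = n - k := by
    rw [Finset.card_compl]; simp [hk]
  set eC : Fin (n - k) ≃o {x // x ∈ (Sᶜ : Finset (Fin n))} := (Sᶜ).orderIsoOfFin hcompl with heC
  -- splitting count lemma
  have hsplit : ∀ (d : Fin n → ℕ), (univ.filter (fun i => d i ≤ a)) = S →
      ∀ j, (univ.filter (fun i => d i ≤ a + j)).card
        = k + ((univ : Finset (Fin (n - k))).filter (fun t => d (eC t) ≤ a + j)).card := by
    intro d hd j
    have hmem : ∀ i, i ∈ S ↔ d i ≤ a := by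
      intro i
      rw [← hd]; simp
    have h1 : (univ : Finset (Fin n)).filter (fun i => d i ≤ a + j)
        = S.filter (fun i => d i ≤ a + j) ∪ (Sᶜ).filter (fun i => d i ≤ a + j) := by
      rw [← Finset.filter_union, Finset.union_compl]
    rw [h1, Finset.card_union_of_disjoint
        (Finset.disjoint_filter_filter disjoint_compl_right)]
    congr 1
    · rw [Finset.filter_true_of_mem]
      intro i hi
      exact le_trans ((hmem i).1 hi) (Nat.le_add_right a j)
    · refine Finset.card_bij' (fun x hx => eC.symm ⟨x, (Finset.mem_filter.1 hx).1⟩)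
        (fun t _ => (eC t : Fin n)) ?_ ?_ ?_ ?_
      · intro x hx
        simp only [Finset.mem_filter, Finset.mem_univ, true_and]
        rw [OrderIso.apply_symm_apply]
        exact (Finset.mem_filter.1 hx).2
      · intro t ht
        refine Finset.mem_filter.2 ⟨(eC t).2, ?_⟩
        exact (Finset.mem_filter.1 ht).2
      · intro x hx
        simp
      · intro t ht
        simp
  -- RHS as a product finset
  have hprod : a ^ k * (Park (n - k) k).card
      = ((Fintype.piFinset fun _ : {x // x ∈ S} => Finset.Icc 1 a) ×ˢ Park (n - k) k).card := by
    rw [Finset.card_product, Fintype.card_piFinset]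
    simp [Nat.card_Icc, hk]
  rw [hprod]
  have hcompl_mem : ∀ i : Fin n, i ∉ S → i ∈ (Sᶜ : Finset (Fin n)) := fun i h => Finset.mem_compl.2 h
  refine Finset.card_bij'
    (fun d _ => ((fun i : {x // x ∈ S} => d i), (fun t => d (eC t) - a)))
    (fun p _ => (fun i => if h : i ∈ S then p.1 ⟨i, h⟩
      else p.2 (eC.symm ⟨i, hcompl_mem i h⟩) + a)) ?_ ?_ ?_ ?_
  · -- forward map lands in product
    intro d hd
    obtain ⟨hdP, hdS⟩ := Finset.mem_filter.1 hd
    obtain ⟨hbnd, hcnt⟩ := mem_park.1 hdP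
    have hmem : ∀ i, i ∈ S ↔ d i ≤ a := by intro i; rw [← hdS]; simp
    have hout : ∀ t : Fin (n - k), a + 1 ≤ d (eC t) := by
      intro t
      have h2 : (eC t : Fin n) ∈ (Sᶜ : Finset (Fin n)) := (eC t).2
      have h3 : ¬ d (eC t) ≤ a := fun hc => (Finset.mem_compl.1 h2) ((hmem _).2 hc)
      omega
    refine Finset.mem_product.2 ⟨?_, ?_⟩
    · refine Fintype.mem_piFinset.2 fun i => ?_
      refine Finset.mem_Icc.2 ⟨(hbnd i).1, (hmem i).1 i.2⟩
    · refine mem_park.2 ⟨?_, ?_⟩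
      · intro t
        have h1 := (hbnd (eC t)).2
        have h2 := hout t
        show 1 ≤ d (eC t) - a ∧ d (eC t) - a ≤ k + (n - k)
        omega
      · intro j' hj'
        have hcond := hcnt (k + j') (by omega)
        rw [hsplit d hdS (k + j')] at hcond
        have hfe : (univ : Finset (Fin (n - k))).filter (fun t => d (eC t) - a ≤ k + j')
            = (univ : Finset (Fin (n - k))).filter (fun t => d (eC t) ≤ a + (k + j')) := by
          refine Finset.filter_congr fun t _ => ?_
          have := hout t
          constructor <;> intro <;> omega
        rw [hfe]
        omega
  · -- backward map lands in fiber
    intro p hp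
    obtain ⟨hp1, hp2⟩ := Finset.mem_product.1 hp
    have hp1' := Fintype.mem_piFinset.1 hp1
    obtain ⟨hbnd2, hcnt2⟩ := mem_park.1 hp2
    set Psi : Fin n → ℕ := fun i => if h : i ∈ S then p.1 ⟨i, h⟩
      else p.2 (eC.symm ⟨i, hcompl_mem i h⟩) + a with hPsi
    have hfil : (univ.filter fun i => Psi i ≤ a) = S := by
      ext i
      simp only [Finset.mem_filter, Finset.mem_univ, true_and]
      by_cases h : i ∈ S
      · simp only [hPsi, dif_pos h]
        exact ⟨fun _ => h, fun _ => (Finset.mem_Icc.1 (hp1' ⟨i, h⟩)).2⟩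
      · simp only [hPsi, dif_neg h]
        have h1 := (hbnd2 (eC.symm ⟨i, hcompl_mem i h⟩)).1
        constructor
        · intro hc; omega
        · intro hc; exact absurd hc h
    have hPsiC : ∀ t : Fin (n - k), Psi (eC t) = p.2 t + a := by
      intro t
      have hni : (eC t : Fin n) ∉ S := Finset.mem_compl.1 (eC t).2
      simp only [hPsi, dif_neg hni]
      congr 1
      have : (⟨(eC t : Fin n), hcompl_mem _ hni⟩ : {x // x ∈ (Sᶜ : Finset (Fin n))}) = eC t :=
        Subtype.ext rfl
      rw [this, OrderIso.symm_apply_apply]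
    refine Finset.mem_filter.2 ⟨mem_park.2 ⟨?_, ?_⟩, hfil⟩
    · intro i
      by_cases h : i ∈ S
      · simp only [hPsi, dif_pos h]
        have := Finset.mem_Icc.1 (hp1' ⟨i, h⟩)
        constructor <;> omega
      · simp only [hPsi, dif_neg h]
        have := hbnd2 (eC.symm ⟨i, hcompl_mem i h⟩)
        constructor <;> omega
    · intro j hj
      rw [hsplit Psi hfil j]
      by_cases hjk : j < k
      · omega
      · have hcond := hcnt2 (j - k) (by omega)
        have hfe : (univ : Finset (Fin (n - k))).filter (fun t => Psi (eC t) ≤ a + j)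
            = (univ : Finset (Fin (n - k))).filter (fun t => p.2 t ≤ k + (j - k)) := by
          refine Finset.filter_congr fun t _ => ?_
          rw [hPsiC t]
          constructor <;> intro <;> omega
        rw [hfe]
        omega
  · -- left inverse
    intro d hd
    obtain ⟨hdP, hdS⟩ := Finset.mem_filter.1 hd
    have hmem : ∀ i, i ∈ S ↔ d i ≤ a := by intro i; rw [← hdS]; simp
    funext i
    by_cases h : i ∈ S
    · simp only [dif_pos h]
    · simp only [dif_neg h]
      rw [OrderIso.apply_symm_apply]
      have h3 : ¬ d i ≤ a := fun hc => h ((hmem i).2 hc)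
      show d i - a + a = d i
      omega
  · -- right inverse
    intro p hp
    obtain ⟨hp1, hp2⟩ := Finset.mem_product.1 hp
    have hbnd2 := (mem_park.1 hp2).1
    refine Prod.ext ?_ ?_
    · funext i
      simp only [dif_pos i.2]
    · funext t
      have hni : (eC t : Fin n) ∉ S := Finset.mem_compl.1 (eC t).2
      simp only [dif_neg hni]
      have : (⟨(eC t : Fin n), hcompl_mem _ hni⟩ : {x // x ∈ (Sᶜ : Finset (Fin n))}) = eC t :=
        Subtype.ext rfl
      rw [this, OrderIso.symm_apply_apply]
      omega

lemma park_rec (n a : ℕ) (hn : 1 ≤ n) (ha : 1 ≤ a) :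
    (Park n a).card = ∑ k ∈ Finset.range (n+1),
      n.choose k * (if k = 0 then 0 else a ^ k * (Park (n - k) k).card) := by
  have h0 := Finset.card_eq_sum_card_fiberwise (s := Park n a)
    (t := (univ : Finset (Fin n)).powerset)
    (f := fun d => univ.filter (fun i => d i ≤ a))
    (fun d _ => Finset.mem_powerset.2 (Finset.subset_univ _))
  rw [h0]
  have h1 : ∀ S ∈ (univ : Finset (Fin n)).powerset,
      ((Park n a).filter fun d => univ.filter (fun i => d i ≤ a) = S).card
        = (fun k => if k = 0 then 0 else a ^ k * (Park (n - k) k).card) S.card := by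
    intro S _
    by_cases hS : S = ∅
    · subst hS
      simp only [Finset.card_empty, if_true, eq_self_iff_true]
      rw [Finset.card_eq_zero, Finset.filter_eq_empty_iff]
      intro d hd hc
      obtain ⟨-, hcnt⟩ := mem_park.1 hd
      have h2 := hcnt 0 hn
      simp only [add_zero] at h2
      rw [hc] at h2
      simp at h2
    · have hne : S.Nonempty := Finset.nonempty_iff_ne_empty.2 hS
      rw [fiber_card n a ha S hne]
      have : S.card ≠ 0 := by simp [Finset.card_eq_zero, hS]
      simp only [if_neg this]
  rw [Finset.sum_congr rfl h1]
  have h2 := Finset.sum_powerset_apply_card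
    (f := fun k => if k = 0 then 0 else a ^ k * (Park (n - k) k).card)
    (x := (univ : Finset (Fin n)))
  rw [h2]
  simp

lemma abel_id (m x y : ℕ) (hm : 1 ≤ m) :
    ∑ k ∈ Finset.range (m+1), m.choose k * k * x^k * y^(m-k) = m * x * (x+y)^(m-1) := by
  obtain ⟨m, rfl⟩ : ∃ m', m = m' + 1 := ⟨m-1, by omega⟩
  rw [Finset.sum_range_succ']
  have key : ∀ k ∈ Finset.range (m+1), (m+1).choose (k+1) * (k+1) * x^(k+1) * y^(m+1-(k+1))
      = (m+1) * x * (x^k * y^(m-k) * m.choose k) := by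
    intro k _
    have h' : (m+1).choose (k+1) * (k+1) = (m+1) * m.choose k := by
      have h := Nat.add_one_mul_choose_eq m k
      simpa [Nat.succ_eq_add_one] using h.symm
    have h2 : m + 1 - (k+1) = m - k := by omega
    rw [h2, h']
    ring
  rw [Finset.sum_congr rfl key, ← Finset.mul_sum]
  have hb := add_pow x y m
  simp only [Nat.cast_id] at hb
  rw [← hb]
  simp

lemma park_card_closed : ∀ n a : ℕ, 1 ≤ a →
    (Park n a).card = if n = 0 then 1 else a * (a+n)^(n-1) := by
  intro n
  induction n using Nat.strong_induction_on with
  | _ n ih =>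
    intro a ha
    rcases Nat.eq_zero_or_pos n with h0 | hn
    · subst h0
      rw [if_pos rfl]
      rw [Park, Finset.filter_true_of_mem (by intro x _ j hj; omega)]
      simp
    · rw [if_neg (by omega), park_rec n a hn ha]
      refine Nat.eq_of_mul_eq_mul_left hn ?_
      rw [Finset.mul_sum]
      have hterm : ∀ k ∈ Finset.range (n+1),
          n * (n.choose k * (if k = 0 then 0 else a ^ k * (Park (n - k) k).card))
            = n.choose k * k * a^k * n^(n-k) := by
        intro k hk
        have hk' : k ≤ n := by simp at hk; omega
        by_cases h0 : k = 0
        · subst h0; simp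
        · have hk1 : 1 ≤ k := by omega
          rw [if_neg h0]
          by_cases hkn : k = n
          · subst hkn
            have : (Park (k - k) k).card = 1 := by
              rw [ih (k - k) (by omega) k hk1, if_pos (by omega)]
            rw [this]
            simp [Nat.choose_self]
          · have hlt : n - k < n := by omega
            rw [ih (n - k) hlt k hk1, if_neg (by omega)]
            have h2 : k + (n - k) = n := by omega
            have h3 : n ^ (n - k) = n * n ^ (n - k - 1) := by
              rw [← pow_succ']
              congr 1
              omega
            rw [h2, h3]
            ring
      rw [Finset.sum_congr rfl hterm, abel_id n a n hn]
      ring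

lemma collapse_count (n m : ℕ) (d : Fin n → ℕ) (j : ℕ) :
    (univ.filter fun i => (if d i ≤ m then 1 else d i + 1 - m) ≤ 1 + j)
      = univ.filter fun i => d i ≤ m + j := by
  refine Finset.filter_congr fun i _ => ?_
  by_cases h : d i ≤ m
  · rw [if_pos h]
    constructor <;> intro <;> omega
  · rw [if_neg h]
    constructor <;> intro <;> omega

lemma colored (n m : ℕ) (hm : 1 ≤ m) :
    (Park n m).card = ∑ c ∈ Park n 1, m ^ (univ.filter (fun i => c i = 1)).card := by
  have hmap : ∀ d ∈ Park n m, (fun i => if d i ≤ m then 1 else d i + 1 - m) ∈ Park n 1 := by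
    intro d hd
    obtain ⟨hdb, hdc⟩ := mem_park.1 hd
    refine mem_park.2 ⟨?_, ?_⟩
    · intro i
      by_cases h : d i ≤ m
      · rw [if_pos h]; omega
      · rw [if_neg h]
        have := (hdb i).2
        omega
    · intro j hj
      rw [collapse_count n m d j]
      have h2 := hdc j hj
      exact h2
  rw [Finset.card_eq_sum_card_fiberwise hmap]
  refine Finset.sum_congr rfl fun c hc => ?_
  obtain ⟨hcb, hcc⟩ := mem_park.1 hc
  have hfib : (Park n m).filter (fun d => (fun i => if d i ≤ m then 1 else d i + 1 - m) = c)
      = Fintype.piFinset (fun i => if c i = 1 then Finset.Icc 1 m else {c i + m - 1}) := by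
    ext d
    simp only [Finset.mem_filter, Fintype.mem_piFinset]
    constructor
    · rintro ⟨hdP, hcol⟩
      intro i
      obtain ⟨hdb, -⟩ := mem_park.1 hdP
      have hci := congrFun hcol i
      by_cases h : c i = 1
      · rw [if_pos h]
        by_cases h2 : d i ≤ m
        · exact Finset.mem_Icc.2 ⟨(hdb i).1, h2⟩
        · rw [if_neg h2] at hci
          omega
      · rw [if_neg h]
        refine Finset.mem_singleton.2 ?_
        by_cases h2 : d i ≤ m
        · rw [if_pos h2] at hci
          exact absurd hci.symm h
        · rw [if_neg h2] at hci
          omega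
    · intro hall
      have hcol : (fun i => if d i ≤ m then 1 else d i + 1 - m) = c := by
        funext i
        have h := hall i
        by_cases hc1 : c i = 1
        · rw [if_pos hc1] at h
          have h2 := Finset.mem_Icc.1 h
          rw [if_pos h2.2, hc1]
        · rw [if_neg hc1] at h
          have hd : d i = c i + m - 1 := Finset.mem_singleton.1 h
          have hci1 : 1 ≤ c i := (hcb i).1
          have hnd : ¬ d i ≤ m := by omega
          rw [if_neg hnd]
          omega
      have hfc := congrFun hcol
      refine ⟨mem_park.2 ⟨?_, ?_⟩, hcol⟩
      · intro i
        have h := hall i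
        by_cases hc1 : c i = 1
        · rw [if_pos hc1] at h
          have h2 := Finset.mem_Icc.1 h
          constructor <;> omega
        · rw [if_neg hc1] at h
          have hd := Finset.mem_singleton.1 h
          have h1 := (hcb i).1
          have h2 := (hcb i).2
          constructor <;> omega
      · intro j hj
        have h2 := hcc j hj
        rw [← collapse_count n m d j]
        have hfe : (univ.filter fun i => (if d i ≤ m then 1 else d i + 1 - m) ≤ 1 + j)
            = univ.filter fun i => c i ≤ 1 + j := by
          refine Finset.filter_congr fun i _ => ?_
          rw [hfc i]
        rw [hfe]
        exact h2
  rw [hfib, Fintype.card_piFinset]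
  have hcard : ∀ i : Fin n, ((if c i = 1 then Finset.Icc 1 m else {c i + m - 1})).card
      = if c i = 1 then m else 1 := by
    intro i
    by_cases h : c i = 1 <;> simp [h, Nat.card_Icc]
  rw [Finset.prod_congr rfl (fun i _ => hcard i), Finset.prod_ite]
  simp

lemma filter_perm_card {n : ℕ} (c : Fin n → ℕ) (σ : Equiv.Perm (Fin n)) (v : ℕ) :
    (univ.filter fun i => c (σ i) ≤ v).card = (univ.filter fun i => c i ≤ v).card := by
  refine Finset.card_bij' (fun i _ => σ i) (fun i _ => σ.symm i) ?_ ?_ ?_ ?_ <;>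
    intro i hi <;> simp only [Finset.mem_filter, Finset.mem_univ, true_and] at hi ⊢ <;>
    simp [hi]

lemma sortedLE_iff {n : ℕ} (c : Fin n → ℕ) :
    SortedLE c (fun i => i.1 + 1) ↔
      ∀ j < n, j + 1 ≤ (univ.filter fun i => c i ≤ 1 + j).card := by
  constructor
  · rintro ⟨σ, hmono, hle⟩ j hj
    rw [← filter_perm_card c σ (1 + j)]
    have hsub : (Finset.Iic (⟨j, hj⟩ : Fin n)) ⊆ univ.filter fun i => c (σ i) ≤ 1 + j := by
      intro i hi
      have hij' : i ≤ (⟨j, hj⟩ : Fin n) := Finset.mem_Iic.1 hi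
      have hij : (i : ℕ) ≤ j := hij'
      refine Finset.mem_filter.2 ⟨Finset.mem_univ _, ?_⟩
      calc c (σ i) ≤ i.1 + 1 := hle i
        _ ≤ 1 + j := by omega
    calc j + 1 = (Finset.Iic (⟨j, hj⟩ : Fin n)).card := by rw [Fin.card_Iic]
      _ ≤ _ := Finset.card_le_card hsub
  · intro h
    refine ⟨Tuple.sort c, fun i j hij => Tuple.monotone_sort c hij, ?_⟩
    intro i
    have hkey := Tuple.lt_card_le_iff_apply_le_of_monotone (f := c ∘ Tuple.sort c) (a := i.1 + 1)
      (j := i) (Tuple.monotone_sort c)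
    refine hkey.1 ?_
    have h2 : Fintype.card {k // (c ∘ Tuple.sort c) k ≤ i.1 + 1}
        = (univ.filter fun k => c (Tuple.sort c k) ≤ i.1 + 1).card := by
      rw [Fintype.card_subtype]
      rfl
    have h3 := h i.1 i.2
    rw [show (1 : ℕ) + i.1 = i.1 + 1 by omega] at h3
    have h4 := filter_perm_card c (Tuple.sort c) (i.1 + 1)
    show (i : ℕ) < (univ.filter fun k => c (Tuple.sort c k) ≤ i.1 + 1).card
    rw [h4]
    omega

lemma parkFinset_eq (n : ℕ) (hn : 1 ≤ n) : parkFinset n = Park n 1 := by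
  ext c
  rw [mem_park]
  simp only [parkFinset, Finset.mem_filter, Fintype.mem_piFinset, Finset.mem_Icc]
  constructor
  · rintro ⟨hb, hs⟩
    exact ⟨fun i => ⟨(hb i).1, by have := (hb i).2; omega⟩, (sortedLE_iff c).1 hs⟩
  · rintro ⟨hb, hc⟩
    refine ⟨?_, (sortedLE_iff c).2 hc⟩
    intro i
    refine ⟨(hb i).1, ?_⟩
    have h2 := hc (n-1) (by omega)
    have h3 : (univ.filter fun k => c k ≤ 1 + (n-1)) = univ := by
      refine Finset.eq_univ_of_card _ (le_antisymm (Finset.card_le_univ _) ?_)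
      simp only [Fintype.card_fin]
      omega
    have h4 : c i ≤ 1 + (n - 1) := by
      have h5 : i ∈ (univ.filter fun k => c k ≤ 1 + (n-1)) := by
        rw [h3]; exact Finset.mem_univ i
      exact (Finset.mem_filter.1 h5).2
    omega

theorem q_analogue_classical (n : ℕ) (hn : 1 ≤ n) (q : ℝ) :
    ∑ c ∈ parkFinset n, q ^ (Finset.univ.filter (fun i => c i = 1)).card =
      q * (q + n) ^ (n - 1) := by
  have hP : ∀ m : ℕ, 1 ≤ m →
      (∑ c ∈ parkFinset n, ((m : ℝ)) ^ (Finset.univ.filter (fun i => c i = 1)).card)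
        = (m : ℝ) * ((m : ℝ) + n) ^ (n - 1) := by
    intro m hm
    have h1 := colored n m hm
    have h2 := park_card_closed n m hm
    have hne : n ≠ 0 := Nat.one_le_iff_ne_zero.1 hn
    rw [if_neg hne] at h2
    have h3 : (∑ c ∈ parkFinset n, ((m : ℝ)) ^ (Finset.univ.filter (fun i => c i = 1)).card)
        = ((∑ c ∈ Park n 1, m ^ (Finset.univ.filter (fun i => c i = 1)).card : ℕ) : ℝ) := by
      rw [parkFinset_eq n hn]
      push_cast
      rfl
    rw [h3, ← h1, h2]
    push_cast
    ring
  have hPeval : ∀ x : ℝ,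
      Polynomial.eval x (∑ c ∈ parkFinset n,
        (Polynomial.X : Polynomial ℝ) ^ (Finset.univ.filter (fun i => c i = 1)).card)
      = ∑ c ∈ parkFinset n, x ^ (Finset.univ.filter (fun i => c i = 1)).card := by
    intro x
    rw [Polynomial.eval_finset_sum]
    simp
  have hQeval : ∀ x : ℝ,
      Polynomial.eval x (Polynomial.X * (Polynomial.X + Polynomial.C (n : ℝ)) ^ (n - 1))
      = x * (x + n) ^ (n - 1) := by
    intro x
    simp
  have hEq : (∑ c ∈ parkFinset n,
        (Polynomial.X : Polynomial ℝ) ^ (Finset.univ.filter (fun i => c i = 1)).card)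
      = Polynomial.X * (Polynomial.X + Polynomial.C (n : ℝ)) ^ (n - 1) := by
    apply Polynomial.eq_of_infinite_eval_eq
    refine Set.infinite_of_injective_forall_mem (f := fun m : ℕ => ((m + 1 : ℕ) : ℝ)) ?_ ?_
    · intro a b hab
      simp only [Nat.cast_inj] at hab
      omega
    · intro m
      simp only [Set.mem_setOf_eq, hPeval, hQeval]
      have := hP (m + 1) (by omega)
      push_cast at this ⊢
      exact this
  have hfin := congrArg (Polynomial.eval q) hEq
  rw [hPeval q, hQeval q] at hfin
  exact hfin
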